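/- Conversely, if Γ₋, Γ₊ are invertible matrix Fourier series with Γ₋ = Id + (strictly negative modes), Γ₊ having only nonnegative modes, and Γ₊ = Γ₋ · g⁻¹γ on S¹, then w := gΓ₋⁻¹ satisfies: γ⁻¹w = Γ₊⁻¹ has only nonnegative modes (so each column of w lies in W = γH₊), and p₊(g⁻¹w) = p₊(Γ₋⁻¹) = Id; i.e. w is the Baker function for W. -/

import Mathlib

open LaurentPolynomial

/-- The `k`-th Fourier (Laurent) coefficient of a matrix-valued loop. -/
noncomputable def matCoeff {n : ℕ} (M : Matrix (Fin n) (Fin n) (LaurentPolynomial ℂ))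
    (k : ℤ) : Matrix (Fin n) (Fin n) ℂ :=
  Matrix.of fun i j => (M i j).coeff k


lemma coeff_mul_top (f g : LaurentPolynomial ℂ) (K : ℤ)
    (hf : ∀ a : ℤ, 0 < a → f.coeff a = 0) (hg : ∀ b : ℤ, K < b → g.coeff b = 0) :
    (f * g).coeff K = f.coeff 0 * g.coeff K := by
  classical
  rw [AddMonoidAlgebra.mul_apply]
  unfold Finsupp.sum
  rw [Finset.sum_eq_single 0]
  · simp only [zero_add]
    rw [Finset.sum_ite_eq' g.coeff.support K (fun b => f.coeff 0 * g.coeff b)]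
    by_cases h : K ∈ g.coeff.support
    · simp [h]
    · simp [Finsupp.notMem_support_iff.mp h, h]
  · intro a ha hane
    apply Finset.sum_eq_zero
    intro b _
    have hale : a ≤ 0 := by
      by_contra h
      exact Finsupp.mem_support_iff.mp ha (hf a (by omega))
    have halt : a < 0 := lt_of_le_of_ne hale hane
    dsimp only
    split_ifs with h
    · rw [hg b (by omega), mul_zero]
    · rfl
  · intro h0
    apply Finset.sum_eq_zero
    intro b _
    rw [Finsupp.notMem_support_iff.mp h0]
    dsimp only
    split_ifs <;> simp

lemma coeff_mul_bot (f g : LaurentPolynomial ℂ) (K : ℤ)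
    (hf : ∀ a : ℤ, a < 0 → f.coeff a = 0) (hg : ∀ b : ℤ, b < K → g.coeff b = 0) :
    (f * g).coeff K = f.coeff 0 * g.coeff K := by
  classical
  rw [AddMonoidAlgebra.mul_apply]
  unfold Finsupp.sum
  rw [Finset.sum_eq_single 0]
  · simp only [zero_add]
    rw [Finset.sum_ite_eq' g.coeff.support K (fun b => f.coeff 0 * g.coeff b)]
    by_cases h : K ∈ g.coeff.support
    · simp [h]
    · simp [Finsupp.notMem_support_iff.mp h, h]
  · intro a ha hane
    apply Finset.sum_eq_zero
    intro b _
    have hale : 0 ≤ a := by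
      by_contra h
      exact Finsupp.mem_support_iff.mp ha (hf a (by omega))
    have halt : 0 < a := lt_of_le_of_ne hale (Ne.symm hane)
    dsimp only
    split_ifs with h
    · rw [hg b (by omega), mul_zero]
    · rfl
  · intro h0
    apply Finset.sum_eq_zero
    intro b _
    rw [Finsupp.notMem_support_iff.mp h0]
    dsimp only
    split_ifs <;> simp

lemma matCoeff_apply {n : ℕ} (M : Matrix (Fin n) (Fin n) (LaurentPolynomial ℂ))
    (k : ℤ) (i j : Fin n) : matCoeff M k i j = (M i j).coeff k := rfl

lemma matCoeff_eq_zero_iff {n : ℕ} (M : Matrix (Fin n) (Fin n) (LaurentPolynomial ℂ))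
    (k : ℤ) : matCoeff M k = 0 ↔ ∀ i j, (M i j).coeff k = 0 := by
  constructor
  · intro h i j
    have := congrFun (congrFun h i) j
    simpa [matCoeff_apply] using this
  · intro h
    ext i j
    simp [matCoeff_apply, h i j]

lemma matCoeff_mul_top {n : ℕ} (M N : Matrix (Fin n) (Fin n) (LaurentPolynomial ℂ)) (K : ℤ)
    (hM : ∀ k : ℤ, 0 < k → matCoeff M k = 0) (hN : ∀ k : ℤ, K < k → matCoeff N k = 0) :
    matCoeff (M * N) K = matCoeff M 0 * matCoeff N K := by
  ext i j
  rw [Matrix.mul_apply, matCoeff_apply, Matrix.mul_apply]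
  rw [AddMonoidAlgebra.coeff_sum, Finsupp.finset_sum_apply]
  apply Finset.sum_congr rfl
  intro l _
  exact coeff_mul_top _ _ _ (fun a ha => (matCoeff_eq_zero_iff M a).mp (hM a ha) i l)
    (fun b hb => (matCoeff_eq_zero_iff N b).mp (hN b hb) l j)

lemma matCoeff_mul_bot {n : ℕ} (M N : Matrix (Fin n) (Fin n) (LaurentPolynomial ℂ)) (K : ℤ)
    (hM : ∀ k : ℤ, k < 0 → matCoeff M k = 0) (hN : ∀ k : ℤ, k < K → matCoeff N k = 0) :
    matCoeff (M * N) K = matCoeff M 0 * matCoeff N K := by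
  ext i j
  rw [Matrix.mul_apply, matCoeff_apply, Matrix.mul_apply]
  rw [AddMonoidAlgebra.coeff_sum, Finsupp.finset_sum_apply]
  apply Finset.sum_congr rfl
  intro l _
  exact coeff_mul_bot _ _ _ (fun a ha => (matCoeff_eq_zero_iff M a).mp (hM a ha) i l)
    (fun b hb => (matCoeff_eq_zero_iff N b).mp (hN b hb) l j)

lemma one_laurent_coeff (k : ℤ) : (1 : LaurentPolynomial ℂ).coeff k = if k = 0 then 1 else 0 := by
  rw [AddMonoidAlgebra.one_def, AddMonoidAlgebra.coeff_single, Finsupp.single_apply]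
  simp [eq_comm]

lemma matCoeff_one_zero {n : ℕ} : matCoeff (1 : Matrix (Fin n) (Fin n) (LaurentPolynomial ℂ)) 0 = 1 := by
  ext i j
  rw [matCoeff_apply, Matrix.one_apply]
  by_cases h : i = j <;> simp [h, Matrix.one_apply, one_laurent_coeff]

lemma matCoeff_one_ne {n : ℕ} (k : ℤ) (hk : k ≠ 0) :
    matCoeff (1 : Matrix (Fin n) (Fin n) (LaurentPolynomial ℂ)) k = 0 := by
  rw [matCoeff_eq_zero_iff]
  intro i j
  rw [Matrix.one_apply]
  by_cases h : i = j
  · simp [h, one_laurent_coeff, hk]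
  · simp [h]

/-- total support of a matrix of Laurent polynomials -/
noncomputable def totSupp {n : ℕ} (N : Matrix (Fin n) (Fin n) (LaurentPolynomial ℂ)) : Finset ℤ :=
  Finset.univ.biUnion fun p : Fin n × Fin n => (N p.1 p.2).coeff.support

lemma mem_totSupp {n : ℕ} (N : Matrix (Fin n) (Fin n) (LaurentPolynomial ℂ)) (k : ℤ) :
    k ∈ totSupp N ↔ matCoeff N k ≠ 0 := by
  rw [totSupp, Finset.mem_biUnion]
  constructor
  · rintro ⟨p, -, hp⟩ h
    exact Finsupp.mem_support_iff.mp hp ((matCoeff_eq_zero_iff N k).mp h p.1 p.2)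
  · intro h
    rw [Ne, matCoeff_eq_zero_iff] at h
    push_neg at h
    obtain ⟨i, j, hij⟩ := h
    exact ⟨(i, j), Finset.mem_univ _, Finsupp.mem_support_iff.mpr hij⟩

/-- inverse of Id + negative modes has the same form -/
lemma inv_neg_modes {n : ℕ} (M N : Matrix (Fin n) (Fin n) (LaurentPolynomial ℂ))
    (hMN : M * N = 1) (hM : ∀ k : ℤ, 0 < k → matCoeff M k = 0)
    (h0 : matCoeff M 0 = 1) : ∀ k : ℤ, 0 < k → matCoeff N k = 0 := by
  by_contra hc
  push_neg at hc
  obtain ⟨k₀, hk₀, hN0⟩ := hc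
  classical
  set T : Finset ℤ := (totSupp N).filter (0 < ·) with hT
  have hne : T.Nonempty := ⟨k₀, Finset.mem_filter.mpr ⟨(mem_totSupp N k₀).mpr hN0, hk₀⟩⟩
  set K := T.max' hne with hK
  have hKT : K ∈ T := T.max'_mem hne
  have hKpos : 0 < K := (Finset.mem_filter.mp hKT).2
  have hKsupp : matCoeff N K ≠ 0 := (mem_totSupp N K).mp (Finset.mem_filter.mp hKT).1
  have habove : ∀ k : ℤ, K < k → matCoeff N k = 0 := by
    intro k hk
    by_contra h
    have : k ∈ T := Finset.mem_filter.mpr ⟨(mem_totSupp N k).mpr h, by omega⟩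
    exact absurd (T.le_max' k this) (by omega)
  have := matCoeff_mul_top M N K hM habove
  rw [hMN, h0, one_mul, matCoeff_one_ne K (by omega)] at this
  exact hKsupp this.symm

/-- inverse of nonneg modes with unit constant term has nonneg modes -/
lemma inv_nonneg_modes {n : ℕ} (M N : Matrix (Fin n) (Fin n) (LaurentPolynomial ℂ))
    (hMN : M * N = 1) (hM : ∀ k : ℤ, k < 0 → matCoeff M k = 0)
    (h0 : IsUnit (matCoeff M 0)) : ∀ k : ℤ, k < 0 → matCoeff N k = 0 := by
  by_contra hc
  push_neg at hc
  obtain ⟨k₀, hk₀, hN0⟩ := hc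
  classical
  set T : Finset ℤ := (totSupp N).filter (· < 0) with hT
  have hne : T.Nonempty := ⟨k₀, Finset.mem_filter.mpr ⟨(mem_totSupp N k₀).mpr hN0, hk₀⟩⟩
  set K := T.min' hne with hK
  have hKT : K ∈ T := T.min'_mem hne
  have hKneg : K < 0 := (Finset.mem_filter.mp hKT).2
  have hKsupp : matCoeff N K ≠ 0 := (mem_totSupp N K).mp (Finset.mem_filter.mp hKT).1
  have hbelow : ∀ k : ℤ, k < K → matCoeff N k = 0 := by
    intro k hk
    by_contra h
    have : k ∈ T := Finset.mem_filter.mpr ⟨(mem_totSupp N k).mpr h, by omega⟩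
    exact absurd (T.min'_le k this) (by omega)
  have heq := matCoeff_mul_bot M N K hM hbelow
  rw [hMN, matCoeff_one_ne K (by omega)] at heq
  exact hKsupp (h0.mul_left_cancel (by rw [← heq, mul_zero]))

/-- Converse direction of Proposition 2.7 of Cafasso–Wu: a solution
`Γ₋ = Id + (negative modes)`, `Γ₊` (nonnegative modes, invertible constant
term) of the Riemann–Hilbert problem `Γ₊ = Γ₋ · g⁻¹γ` yields the Baker
function `w := gΓ₋⁻¹` for `W = γH₊`: `γ⁻¹w = Γ₊⁻¹` has only nonnegative
modes (columns of `w` lie in `W`), and `p₊(g⁻¹w) = p₊(Γ₋⁻¹) = Id`. -/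
theorem RH_solution_gives_baker {n : ℕ}
    (g γ Γm Γp : Matrix (Fin n) (Fin n) (LaurentPolynomial ℂ))
    (hg : IsUnit g) (hγ : IsUnit γ) (hΓm : IsUnit Γm) (hΓp : IsUnit Γp)
    -- `Γ₋ = Id + (strictly negative modes)`
    (hΓm0 : matCoeff Γm 0 = 1) (hΓmpos : ∀ k : ℤ, 0 < k → matCoeff Γm k = 0)
    -- `Γ₊` has only nonnegative modes, with invertible constant term
    (hΓpneg : ∀ k : ℤ, k < 0 → matCoeff Γp k = 0)
    (hΓp0 : IsUnit (matCoeff Γp 0))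
    -- the jump relation
    (hjump : Γp = Γm * (Ring.inverse g * γ)) :
    -- `γ⁻¹ w = Γ₊⁻¹` ...
    Ring.inverse γ * (g * Ring.inverse Γm) = Ring.inverse Γp ∧
    -- ... has only nonnegative modes
    (∀ k : ℤ, k < 0 → matCoeff (Ring.inverse γ * (g * Ring.inverse Γm)) k = 0) ∧
    -- and `p₊(g⁻¹w) = p₊(Γ₋⁻¹) = Id`
    Ring.inverse g * (g * Ring.inverse Γm) = Ring.inverse Γm ∧
    matCoeff (Ring.inverse Γm) 0 = 1 ∧
    (∀ k : ℤ, 0 < k → matCoeff (Ring.inverse Γm) k = 0) := by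
  set X := Ring.inverse γ * (g * Ring.inverse Γm) with hX
  have hXΓp : X * Γp = 1 := by
    rw [hX, hjump]
    simp only [mul_assoc]
    rw [Ring.inverse_mul_cancel_left _ _ hΓm, Ring.mul_inverse_cancel_left _ _ hg,
      Ring.inverse_mul_cancel _ hγ]
  have h1 : X = Ring.inverse Γp := by
    calc X = X * (Γp * Ring.inverse Γp) := by rw [Ring.mul_inverse_cancel _ hΓp, mul_one]
      _ = (X * Γp) * Ring.inverse Γp := (mul_assoc X Γp (Ring.inverse Γp)).symm
      _ = Ring.inverse Γp := by rw [hXΓp, one_mul]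
  have hmN : Γm * Ring.inverse Γm = 1 := Ring.mul_inverse_cancel _ hΓm
  have h5 : ∀ k : ℤ, 0 < k → matCoeff (Ring.inverse Γm) k = 0 :=
    inv_neg_modes Γm _ hmN hΓmpos hΓm0
  have h4 : matCoeff (Ring.inverse Γm) 0 = 1 := by
    have := matCoeff_mul_top Γm (Ring.inverse Γm) 0 hΓmpos h5
    rw [hmN, hΓm0, one_mul, matCoeff_one_zero] at this
    exact this.symm
  refine ⟨h1, ?_, ?_, h4, h5⟩
  · intro k hk
    rw [h1]
    exact inv_nonneg_modes Γp _ (Ring.mul_inverse_cancel _ hΓp) hΓpneg hΓp0 k hk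
  · rw [← mul_assoc, Ring.inverse_mul_cancel _ hg, one_mul]
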